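/- Let f : ℝⁿ → ℝ be L-Lipschitz in the ℓ₂-norm with L > 0, c ∈ ℝⁿ, R > 0, ε ∈ (0, LR], and let F : ℝⁿ → ℝ satisfy |F(x) − f_reg(x)| ≤ ε for all x, where f_reg(x) := f(x) + 2L·max(0, ‖x − c‖₂ − R). Then every minimizer x* of F satisfies ‖x* − c‖₂ ≤ 3R. -/

import Mathlib

/-- if `F` uniformly `ε`-approximates the ℓ₂-regularized function
`f_reg x = f x + 2L max(0, ‖x - c‖₂ - R)` with `ε ∈ (0, LR]`, then every minimizer
of `F` lies within distance `3R` of `c`. -/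
theorem stmt_18 (n : ℕ) (f : EuclideanSpace ℝ (Fin n) → ℝ) (L : ℝ) (hL : 0 < L)
    (hlip : ∀ x y : EuclideanSpace ℝ (Fin n), |f x - f y| ≤ L * ‖x - y‖)
    (c : EuclideanSpace ℝ (Fin n)) (R : ℝ) (hR : 0 < R)
    (ε : ℝ) (hε : 0 < ε) (hεLR : ε ≤ L * R)
    (freg F : EuclideanSpace ℝ (Fin n) → ℝ)
    (hfreg : ∀ x, freg x = f x + 2 * L * max 0 (‖x - c‖ - R))
    (hF : ∀ x, |F x - freg x| ≤ ε) :
    ∀ xstar : EuclideanSpace ℝ (Fin n),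
      (∀ z, F xstar ≤ F z) → ‖xstar - c‖ ≤ 3 * R := by
  intro y hmin
  by_contra hcon
  push_neg at hcon
  set t : ℝ := ‖y - c‖ with ht
  have ht3 : 3 * R < t := hcon
  have htpos : 0 < t := lt_trans (by positivity) ht3
  set yt : EuclideanSpace ℝ (Fin n) := c + (R / t) • (y - c) with hyt
  have hytc : yt - c = (R / t) • (y - c) := by
    simp [hyt]
  have hnyt : ‖yt - c‖ = R := by
    rw [hytc, norm_smul]
    rw [Real.norm_eq_abs, abs_of_pos (by positivity)]
    field_simp
    exact ht.symm
  have hyyt : y - yt = (1 - R / t) • (y - c) := by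
    rw [hyt, sub_smul, one_smul]
    abel
  have hRt : R / t ≤ 1 := by
    rw [div_le_one htpos]
    nlinarith
  have hnyyt : ‖y - yt‖ = t - R := by
    rw [hyyt, norm_smul, Real.norm_eq_abs, abs_of_nonneg (by linarith), ← ht]
    field_simp
  -- f yt ≤ f y + L (t - R)
  have hfle : f yt ≤ f y + L * (t - R) := by
    have h := hlip yt y
    rw [norm_sub_rev, hnyyt] at h
    have := abs_le.mp h
    linarith [this.1, this.2]
  have hfregyt : freg yt = f yt := by
    rw [hfreg, hnyt]
    simp
  have hfregy : freg y = f y + 2 * L * (t - R) := by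
    rw [hfreg, ← ht, max_eq_right (by linarith)]
  have h1 := abs_le.mp (hF yt)
  have h2 := abs_le.mp (hF y)
  have hFyt : F yt ≤ f yt + ε := by rw [← hfregyt]; linarith [h1.2]
  have hFy : f y + 2 * L * (t - R) - ε ≤ F y := by rw [← hfregy]; linarith [h2.1]
  have := hmin yt
  nlinarith
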